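/- Let 𝔨 be a finite-dimensional real Lie algebra with an invariant inner product. Let 𝔞 be a smooth solution of the Yang–Mills–Poisson equation and 𝔲 : ℝ³ × [0,∞) → 𝔨³ a smooth map, both vanishing for |x| ≥ R (some R > 0, for all s). Assume the function s ↦ (∂_s 𝔞(·,s), ∂_s 𝔲(·,s))_{L²} + (𝔟(·,s), d_𝔞 𝔲(·,s))_{L²} is integrable on [0,∞) and that (𝔲(·,s), ∂_s 𝔞(·,s))_{L²} → 0 as s → ∞. Then ∫₀^∞ [ (∂_s 𝔞(·,s), ∂_s 𝔲(·,s))_{L²} + (𝔟(·,s), d_𝔞 𝔲(·,s))_{L²} ] ds = −(𝔲(·,0), ∂_s 𝔞(·,0))_{L²}. (This is the identity behind the first-derivative formula ∂_u 𝒫(A) = −2(u, 𝔞′(0)) for the Poisson action.) -/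

import Mathlib

open MeasureTheory

/-- Partial derivative `∂_j f` of a function on `ℝ³` with values in a normed
real vector space. -/
noncomputable def pd3 {𝕜 : Type*} [NormedAddCommGroup 𝕜] [NormedSpace ℝ 𝕜]
    (j : Fin 3) (f : (Fin 3 → ℝ) → 𝕜) (x : Fin 3 → ℝ) : 𝕜 :=
  fderiv ℝ f x (Pi.single j 1)

/-- Spatial curvature `𝔟_{jk}(x,s) = ∂_j 𝔞_k − ∂_k 𝔞_j + [𝔞_j, 𝔞_k]` of a
time-dependent `𝔨`-valued gauge potential, with bracket `β`. -/
noncomputable def curvK {𝔨 : Type*} [NormedAddCommGroup 𝔨] [NormedSpace ℝ 𝔨]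
    (β : 𝔨 →ₗ[ℝ] 𝔨 →ₗ[ℝ] 𝔨) (𝔞 : Fin 3 → (Fin 3 → ℝ) → ℝ → 𝔨) (j k : Fin 3)
    (x : Fin 3 → ℝ) (s : ℝ) : 𝔨 :=
  pd3 j (fun y => 𝔞 k y s) x - pd3 k (fun y => 𝔞 j y s) x
    + β (𝔞 j x s) (𝔞 k x s)

/-- Covariant exterior derivative of a time-dependent `𝔨`-valued 1-form `𝔲`
along a potential `𝔞`: `(d_𝔞 𝔲)_{jk} = ∂_j^𝔞 𝔲_k − ∂_k^𝔞 𝔲_j`. -/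
noncomputable def covExtK {𝔨 : Type*} [NormedAddCommGroup 𝔨] [NormedSpace ℝ 𝔨]
    (β : 𝔨 →ₗ[ℝ] 𝔨 →ₗ[ℝ] 𝔨) (𝔞 𝔲 : Fin 3 → (Fin 3 → ℝ) → ℝ → 𝔨) (j k : Fin 3)
    (x : Fin 3 → ℝ) (s : ℝ) : 𝔨 :=
  (pd3 j (fun y => 𝔲 k y s) x + β (𝔞 j x s) (𝔲 k x s))
    - (pd3 k (fun y => 𝔲 j y s) x + β (𝔞 k x s) (𝔲 j x s))

/-- The Yang–Mills–Poisson equation in temporal gauge: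
`∂_s² 𝔞_j = −∑_k ∂_k^𝔞 𝔟_{kj}` where `∂_k^𝔞 ξ = ∂_k ξ + [𝔞_k, ξ]`. -/
def YangMillsPoissonK {𝔨 : Type*} [NormedAddCommGroup 𝔨] [NormedSpace ℝ 𝔨]
    (β : 𝔨 →ₗ[ℝ] 𝔨 →ₗ[ℝ] 𝔨) (𝔞 : Fin 3 → (Fin 3 → ℝ) → ℝ → 𝔨) : Prop :=
  ∀ j x (s : ℝ), 0 ≤ s →
    deriv (fun τ => deriv (fun σ => 𝔞 j x σ) τ) s =
      -∑ k, (pd3 k (fun y => curvK β 𝔞 k j y s) x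
        + β (𝔞 k x s) (curvK β 𝔞 k j x s))

section Aux

variable {𝔨 : Type*} [NormedAddCommGroup 𝔨] [NormedSpace ℝ 𝔨]

abbrev E3 := Fin 3 → ℝ

lemma sup_le_eucl (x : E3) : ‖x‖ ≤ Real.sqrt (∑ i, x i ^ 2) := by
  rw [pi_norm_le_iff_of_nonneg (Real.sqrt_nonneg _)]
  intro i
  rw [Real.norm_eq_abs, ← Real.sqrt_sq_eq_abs]
  exact Real.sqrt_le_sqrt
    (Finset.single_le_sum (f := fun i => x i ^ 2) (fun i _ => sq_nonneg _) (Finset.mem_univ i))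

lemma hasDerivAt_slice {f : E3 × ℝ → 𝔨} (hf : ContDiff ℝ (⊤ : ℕ∞) f) (x : E3) (s : ℝ) :
    HasDerivAt (fun σ => f (x, σ)) (fderiv ℝ f (x, s) (0, 1)) s := by
  have h1 : HasFDerivAt f (fderiv ℝ f (x, s)) (x, s) :=
    (hf.differentiable (by simp) (x, s)).hasFDerivAt
  have h2 : HasDerivAt (fun σ : ℝ => ((x, σ) : E3 × ℝ)) ((0 : E3), (1 : ℝ)) s :=
    (hasDerivAt_const s x).prodMk (hasDerivAt_id s)
  exact h1.comp_hasDerivAt s h2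

lemma deriv_slice {f : E3 × ℝ → 𝔨} (hf : ContDiff ℝ (⊤ : ℕ∞) f) (x : E3) (s : ℝ) :
    deriv (fun σ => f (x, σ)) s = fderiv ℝ f (x, s) (0, 1) :=
  (hasDerivAt_slice hf x s).deriv

lemma pd3_slice_eq {f : E3 × ℝ → 𝔨} (hf : ContDiff ℝ (⊤ : ℕ∞) f) (j : Fin 3) (x : E3) (s : ℝ) :
    pd3 j (fun y => f (y, s)) x = fderiv ℝ f (x, s) (Pi.single j 1, 0) := by
  have h1 : HasFDerivAt f (fderiv ℝ f (x, s)) (x, s) :=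
    (hf.differentiable (by simp) (x, s)).hasFDerivAt
  have h2 : HasFDerivAt (fun y : E3 => ((y, s) : E3 × ℝ))
      ((ContinuousLinearMap.id ℝ E3).prod 0) x :=
    ((ContinuousLinearMap.id ℝ E3).hasFDerivAt).prodMk (hasFDerivAt_const s x)
  have h3 : HasFDerivAt (fun y : E3 => f (y, s))
      ((fderiv ℝ f (x, s)).comp ((ContinuousLinearMap.id ℝ E3).prod 0)) x := h1.comp x h2
  rw [pd3, h3.fderiv]
  simp

lemma contDiff_pdV {f : E3 × ℝ → 𝔨} (hf : ContDiff ℝ (⊤ : ℕ∞) f) (w : E3 × ℝ) :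
    ContDiff ℝ (⊤ : ℕ∞) (fun p => fderiv ℝ f p w) :=
  (hf.fderiv_right (mod_cast le_top)).clm_apply contDiff_const

lemma pd3_eq_zero_of_eventually {g : E3 → 𝔨} {x : E3} (h : ∀ᶠ y in nhds x, g y = 0) (j : Fin 3) :
    pd3 j g x = 0 := by
  have : g =ᶠ[nhds x] (fun _ => (0 : 𝔨)) := h
  rw [pd3, this.fderiv_eq]
  simp

end Aux

section IBP

variable {𝔨 : Type*} [NormedAddCommGroup 𝔨] [InnerProductSpace ℝ 𝔨]

lemma integral_fderiv_apply_eq_zero {g : E3 → ℝ} (hg : ContDiff ℝ (⊤ : ℕ∞) g)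
    (hsupp : HasCompactSupport g) (v : E3) :
    ∫ x : E3, fderiv ℝ g x v = 0 := by
  obtain ⟨D, hD⟩ := hg.lipschitzWith_of_hasCompactSupport hsupp (by simp)
  have h0 : LipschitzWith 0 (fun _ : E3 => (1 : ℝ)) := LipschitzWith.const 1
  have key := h0.integral_lineDeriv_mul_eq (μ := volume) hD hsupp (-v)
  have L : ∀ x : E3, lineDeriv ℝ (fun _ : E3 => (1 : ℝ)) x (-v) = 0 := by
    intro x
    simp [lineDeriv, lineDerivWithin]
  simp only [L, zero_mul, integral_zero] at key
  have L2 : ∀ x : E3, lineDeriv ℝ g x (-(-v)) * (1 : ℝ) = fderiv ℝ g x v := by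
    intro x
    rw [mul_one, neg_neg, (hg.differentiable (by simp) x).lineDeriv_eq_fderiv]
  simp only [L2] at key
  exact key.symm

lemma integral_inner_pd3 {u v : E3 → 𝔨} (hu : ContDiff ℝ (⊤ : ℕ∞) u)
    (hv : ContDiff ℝ (⊤ : ℕ∞) v) {K : Set E3} (hK : IsCompact K)
    (hKu : ∀ x ∉ K, u x = 0) (hKv : ∀ x ∉ K, v x = 0) (k : Fin 3) :
    ∫ x : E3, (inner ℝ (u x) (pd3 k v x) : ℝ) = -∫ x : E3, (inner ℝ (pd3 k u x) (v x) : ℝ) := by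
  have hgc : ContDiff ℝ (⊤ : ℕ∞) (fun x => (inner ℝ (u x) (v x) : ℝ)) := hu.inner ℝ hv
  have hgs : HasCompactSupport (fun x => (inner ℝ (u x) (v x) : ℝ)) :=
    HasCompactSupport.intro hK (fun x hx => by rw [hKu x hx]; simp)
  have hz := integral_fderiv_apply_eq_zero hgc hgs (Pi.single k 1)
  have hder : ∀ x : E3, fderiv ℝ (fun x => (inner ℝ (u x) (v x) : ℝ)) x (Pi.single k 1)
      = (inner ℝ (u x) (pd3 k v x) : ℝ) + (inner ℝ (pd3 k u x) (v x) : ℝ) := by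
    intro x
    exact fderiv_inner_apply ℝ (hu.differentiable (by simp) x) (hv.differentiable (by simp) x) _
  rw [funext (fun x : E3 => hder x)] at hz
  have hcu : Continuous fun x : E3 => pd3 k u x :=
    (hu.continuous_fderiv (by simp)).clm_apply continuous_const
  have hcv : Continuous fun x : E3 => pd3 k v x :=
    (hv.continuous_fderiv (by simp)).clm_apply continuous_const
  have ia : Integrable (fun x : E3 => (inner ℝ (u x) (pd3 k v x) : ℝ)) volume := by
    apply Continuous.integrable_of_hasCompactSupport
      ((hu.continuous.inner hcv))
    exact HasCompactSupport.intro hK (fun x hx => by rw [hKu x hx]; simp)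
  have ib : Integrable (fun x : E3 => (inner ℝ (pd3 k u x) (v x) : ℝ)) volume := by
    apply Continuous.integrable_of_hasCompactSupport
      ((hcu.inner hv.continuous))
    exact HasCompactSupport.intro hK (fun x hx => by rw [hKv x hx]; simp)
  rw [integral_add ia ib] at hz
  linarith

end IBP

section Aux2

variable {𝔨 : Type*} [NormedAddCommGroup 𝔨] [NormedSpace ℝ 𝔨]

/-- Time derivative of a jointly-defined function. -/
noncomputable def pdT (f : E3 × ℝ → 𝔨) (p : E3 × ℝ) : 𝔨 := fderiv ℝ f p (0, 1)

lemma contDiff_pdT {f : E3 × ℝ → 𝔨} (hf : ContDiff ℝ (⊤ : ℕ∞) f) :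
    ContDiff ℝ (⊤ : ℕ∞) (pdT f) := contDiff_pdV hf _

lemma hasDerivAt_pdT {f : E3 × ℝ → 𝔨} (hf : ContDiff ℝ (⊤ : ℕ∞) f) (x : E3) (s : ℝ) :
    HasDerivAt (fun σ => f (x, σ)) (pdT f (x, s)) s := hasDerivAt_slice hf x s

lemma deriv_pdT {f : E3 × ℝ → 𝔨} (hf : ContDiff ℝ (⊤ : ℕ∞) f) (x : E3) (s : ℝ) :
    deriv (fun σ => f (x, σ)) s = pdT f (x, s) := deriv_slice hf x s

lemma contDiff_slice {f : E3 × ℝ → 𝔨} (hf : ContDiff ℝ (⊤ : ℕ∞) f) (s : ℝ) :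
    ContDiff ℝ (⊤ : ℕ∞) (fun y => f (y, s)) :=
  hf.comp (contDiff_id.prodMk contDiff_const)

lemma contDiff_pd3 {g : E3 → 𝔨} (hg : ContDiff ℝ (⊤ : ℕ∞) g) (j : Fin 3) :
    ContDiff ℝ (⊤ : ℕ∞) (pd3 j g) :=
  (hg.fderiv_right (mod_cast le_top)).clm_apply contDiff_const

lemma beta_skew [FiniteDimensional ℝ 𝔨] {β : 𝔨 →ₗ[ℝ] 𝔨 →ₗ[ℝ] 𝔨}
    (halt : ∀ x : 𝔨, β x x = 0) (x y : 𝔨) : β x y = -β y x := by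
  have h := halt (x + y)
  simp only [map_add, LinearMap.add_apply, halt x, halt y, zero_add, add_zero] at h
  exact eq_neg_of_add_eq_zero_right h

end Aux2

section Aux3

variable {𝔨 : Type*} [NormedAddCommGroup 𝔨] [NormedSpace ℝ 𝔨] [FiniteDimensional ℝ 𝔨]

lemma contDiff_beta_comp {β : 𝔨 →ₗ[ℝ] 𝔨 →ₗ[ℝ] 𝔨} {X : Type*} [NormedAddCommGroup X]
    [NormedSpace ℝ X] {a b : X → 𝔨} (ha : ContDiff ℝ (⊤ : ℕ∞) a)
    (hb : ContDiff ℝ (⊤ : ℕ∞) b) :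
    ContDiff ℝ (⊤ : ℕ∞) (fun x => β (a x) (b x)) := by
  let β₁ : 𝔨 →ₗ[ℝ] (𝔨 →L[ℝ] 𝔨) :=
    (LinearMap.toContinuousLinearMap : (𝔨 →ₗ[ℝ] 𝔨) ≃ₗ[ℝ] (𝔨 →L[ℝ] 𝔨)).toLinearMap.comp β
  let βL : 𝔨 →L[ℝ] 𝔨 →L[ℝ] 𝔨 := LinearMap.toContinuousLinearMap β₁
  have hco : ∀ x y : 𝔨, βL x y = β x y := fun x y => rfl
  have h2 : ContDiff ℝ (⊤ : ℕ∞) (fun p : 𝔨 × 𝔨 => βL p.1 p.2) :=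
    βL.isBoundedBilinearMap.contDiff
  have h3 := h2.comp (ha.prodMk hb)
  simpa only [hco, Function.comp_def] using h3

lemma continuous_beta_comp {β : 𝔨 →ₗ[ℝ] 𝔨 →ₗ[ℝ] 𝔨} {X : Type*} [TopologicalSpace X]
    {a b : X → 𝔨} (ha : Continuous a) (hb : Continuous b) :
    Continuous (fun x => β (a x) (b x)) := by
  let β₁ : 𝔨 →ₗ[ℝ] (𝔨 →L[ℝ] 𝔨) :=
    (LinearMap.toContinuousLinearMap : (𝔨 →ₗ[ℝ] 𝔨) ≃ₗ[ℝ] (𝔨 →L[ℝ] 𝔨)).toLinearMap.comp β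
  let βL : 𝔨 →L[ℝ] 𝔨 →L[ℝ] 𝔨 := LinearMap.toContinuousLinearMap β₁
  have hco : ∀ x y : 𝔨, βL x y = β x y := fun x y => rfl
  have h2 : Continuous (fun p : 𝔨 × 𝔨 => βL p.1 p.2) := βL.isBoundedBilinearMap.continuous
  have h3 := h2.comp (ha.prodMk hb)
  simpa only [hco, Function.comp_def] using h3

end Aux3

section Aux4

variable {𝔨 : Type*} [NormedAddCommGroup 𝔨] [InnerProductSpace ℝ 𝔨]

lemma sum_inner_identity (B D : Fin 3 → Fin 3 → 𝔨) (hB : ∀ j k, B j k = -B k j) :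
    ∑ j, ∑ k, (inner ℝ (D k j) (B k j) : ℝ)
      = (1 / 2) * ∑ j, ∑ k, (inner ℝ (B j k) (D j k - D k j) : ℝ) := by
  have h1 : ∀ j k : Fin 3, (inner ℝ (B j k) (D j k - D k j) : ℝ)
      = (inner ℝ (B j k) (D j k) : ℝ) - (inner ℝ (B j k) (D k j) : ℝ) := by
    intro j k; rw [inner_sub_right]
  simp only [h1, Finset.sum_sub_distrib]
  have h2 : ∑ j, ∑ k, (inner ℝ (B j k) (D k j) : ℝ)
      = -∑ j, ∑ k, (inner ℝ (B j k) (D j k) : ℝ) := by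
    rw [Finset.sum_comm]
    rw [← Finset.sum_neg_distrib]
    refine Finset.sum_congr rfl fun k _ => ?_
    rw [← Finset.sum_neg_distrib]
    refine Finset.sum_congr rfl fun j _ => ?_
    rw [hB j k, inner_neg_left]
  have h3 : ∑ j, ∑ k, (inner ℝ (D k j) (B k j) : ℝ)
      = ∑ j, ∑ k, (inner ℝ (B j k) (D j k) : ℝ) := by
    rw [Finset.sum_comm]
    refine Finset.sum_congr rfl fun k _ => Finset.sum_congr rfl fun j _ => ?_
    rw [real_inner_comm]
  rw [h3, h2]
  ring

end Aux4

section Aux5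

variable {𝔨 : Type*} [NormedAddCommGroup 𝔨] [NormedSpace ℝ 𝔨]

lemma vanish_pd3_slice {R : ℝ} {g : E3 → 𝔨} (hg0 : ∀ y : E3, R < ‖y‖ → g y = 0)
    (j : Fin 3) {x : E3} (hx : R < ‖x‖) : pd3 j g x = 0 := by
  apply pd3_eq_zero_of_eventually _ j
  have hop : IsOpen {y : E3 | R < ‖y‖} := isOpen_lt continuous_const continuous_norm
  filter_upwards [hop.mem_nhds hx] with y hy using hg0 y hy

lemma vanish_fderiv_joint {R : ℝ} {f : E3 × ℝ → 𝔨}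
    (hf : ∀ p : E3 × ℝ, 0 < p.2 → R < ‖p.1‖ → f p = 0) (w : E3 × ℝ) :
    ∀ p : E3 × ℝ, 0 < p.2 → R < ‖p.1‖ → fderiv ℝ f p w = 0 := by
  intro p hp1 hp2
  have hop : IsOpen {q : E3 × ℝ | 0 < q.2 ∧ R < ‖q.1‖} :=
    (isOpen_lt continuous_const continuous_snd).inter
      (isOpen_lt continuous_const (continuous_norm.comp continuous_fst))
  have hev : f =ᶠ[nhds p] (fun _ => (0 : 𝔨)) := by
    filter_upwards [hop.mem_nhds ⟨hp1, hp2⟩] with q hq using hf q hq.1 hq.2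
  rw [hev.fderiv_eq]
  simp

end Aux5

section Aux6

variable {𝔨 : Type*} [NormedAddCommGroup 𝔨] [NormedSpace ℝ 𝔨]

lemma curv_antisym {β : 𝔨 →ₗ[ℝ] 𝔨 →ₗ[ℝ] 𝔨} [FiniteDimensional ℝ 𝔨]
    (halt : ∀ x : 𝔨, β x x = 0) (𝔞 : Fin 3 → E3 → ℝ → 𝔨) (j k : Fin 3) (x : E3) (s : ℝ) :
    curvK β 𝔞 j k x s = -curvK β 𝔞 k j x s := by
  unfold curvK
  rw [beta_skew halt]
  abel

end Aux6
/-- Let `𝔨` be a finite-dimensional real Lie algebra with an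
invariant inner ℝ product, `𝔞` a smooth compactly (in `x`) supported solution of
the Yang–Mills–Poisson equation and `𝔲` a smooth compactly supported map.  If
`s ↦ (∂_s 𝔞(·,s), ∂_s 𝔲(·,s))_{L²} + (𝔟(·,s), d_𝔞 𝔲(·,s))_{L²}` is integrable
on `[0,∞)` and `(𝔲(·,s), ∂_s 𝔞(·,s))_{L²} → 0` as `s → ∞`, then
`∫₀^∞ [(∂_s 𝔞, ∂_s 𝔲)_{L²} + (𝔟, d_𝔞 𝔲)_{L²}] ds = −(𝔲(·,0), ∂_s 𝔞(·,0))_{L²}`. -/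
theorem poissonAction_firstDerivative_identity
    (𝔨 : Type*) [NormedAddCommGroup 𝔨] [InnerProductSpace ℝ 𝔨]
    [FiniteDimensional ℝ 𝔨]
    (β : 𝔨 →ₗ[ℝ] 𝔨 →ₗ[ℝ] 𝔨)
    (halt : ∀ x : 𝔨, β x x = 0)
    (hjac : ∀ x y z : 𝔨, β x (β y z) + β y (β z x) + β z (β x y) = 0)
    (hinv : ∀ x y z : 𝔨, (inner ℝ (β z x) y : ℝ) + (inner ℝ x (β z y) : ℝ) = 0)
    (𝔞 𝔲 : Fin 3 → (Fin 3 → ℝ) → ℝ → 𝔨)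
    (h𝔞 : ∀ j, ContDiff ℝ (⊤ : ℕ∞) fun p : (Fin 3 → ℝ) × ℝ => 𝔞 j p.1 p.2)
    (h𝔲 : ∀ j, ContDiff ℝ (⊤ : ℕ∞) fun p : (Fin 3 → ℝ) × ℝ => 𝔲 j p.1 p.2)
    (hYMP : YangMillsPoissonK β 𝔞)
    (R : ℝ) (hR : 0 < R)
    (hsupp𝔞 : ∀ j (x : Fin 3 → ℝ) (s : ℝ), 0 ≤ s →
      R ≤ Real.sqrt (∑ i, x i ^ 2) → 𝔞 j x s = 0)
    (hsupp𝔲 : ∀ j (x : Fin 3 → ℝ) (s : ℝ), 0 ≤ s →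
      R ≤ Real.sqrt (∑ i, x i ^ 2) → 𝔲 j x s = 0)
    (hint : IntegrableOn
      (fun s : ℝ =>
        (∑ j, ∫ x : Fin 3 → ℝ,
          (inner ℝ (deriv (fun σ => 𝔞 j x σ) s) (deriv (fun σ => 𝔲 j x σ) s) : ℝ))
        + (1 / 2) * ∑ j, ∑ k, ∫ x : Fin 3 → ℝ,
            (inner ℝ (curvK β 𝔞 j k x s) (covExtK β 𝔞 𝔲 j k x s) : ℝ))
      (Set.Ioi (0 : ℝ)))
    (hdecay : Filter.Tendsto
      (fun s : ℝ => ∑ j, ∫ x : Fin 3 → ℝ,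
        (inner ℝ (𝔲 j x s) (deriv (fun σ => 𝔞 j x σ) s) : ℝ))
      Filter.atTop (nhds 0)) :
    ∫ s in Set.Ioi (0 : ℝ),
        ((∑ j, ∫ x : Fin 3 → ℝ,
          (inner ℝ (deriv (fun σ => 𝔞 j x σ) s) (deriv (fun σ => 𝔲 j x σ) s) : ℝ))
        + (1 / 2) * ∑ j, ∑ k, ∫ x : Fin 3 → ℝ,
            (inner ℝ (curvK β 𝔞 j k x s) (covExtK β 𝔞 𝔲 j k x s) : ℝ))
      = -(∑ j, ∫ x : Fin 3 → ℝ,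
          (inner ℝ (𝔲 j x 0) (deriv (fun σ => 𝔞 j x σ) 0) : ℝ)) := by
  classical
  -- time-derivative rewriting
  have d1a : ∀ (j : Fin 3) (x : E3) (s : ℝ), deriv (fun σ => 𝔞 j x σ) s
      = pdT (fun p : E3 × ℝ => 𝔞 j p.1 p.2) (x, s) := fun j x s => deriv_pdT (h𝔞 j) x s
  have d1u : ∀ (j : Fin 3) (x : E3) (s : ℝ), deriv (fun σ => 𝔲 j x σ) s
      = pdT (fun p : E3 × ℝ => 𝔲 j p.1 p.2) (x, s) := fun j x s => deriv_pdT (h𝔲 j) x s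
  have d2a : ∀ (j : Fin 3) (x : E3) (s : ℝ),
      deriv (fun τ => deriv (fun σ => 𝔞 j x σ) τ) s
        = pdT (pdT (fun p : E3 × ℝ => 𝔞 j p.1 p.2)) (x, s) := by
    intro j x s
    have he : (fun τ => deriv (fun σ => 𝔞 j x σ) τ)
        = fun τ => pdT (fun p : E3 × ℝ => 𝔞 j p.1 p.2) (x, τ) := funext fun τ => d1a j x τ
    rw [he]
    exact deriv_pdT (contDiff_pdT (h𝔞 j)) x s
  have hYMP' : ∀ (j : Fin 3) (x : E3) (s : ℝ), 0 ≤ s →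
      pdT (pdT (fun p : E3 × ℝ => 𝔞 j p.1 p.2)) (x, s)
        = -∑ k, (pd3 k (fun y => curvK β 𝔞 k j y s) x
            + β (𝔞 k x s) (curvK β 𝔞 k j x s)) := by
    intro j x s hs
    rw [← d2a j x s]
    exact hYMP j x s hs
  -- support facts
  have hsup3 : ∀ x : E3, R < ‖x‖ → R ≤ Real.sqrt (∑ i, x i ^ 2) :=
    fun x hx => le_trans hx.le (sup_le_eucl x)
  have hu0 : ∀ (j : Fin 3) (x : E3) (s : ℝ), 0 ≤ s → R < ‖x‖ → 𝔲 j x s = 0 :=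
    fun j x s hs hx => hsupp𝔲 j x s hs (hsup3 x hx)
  have ha0 : ∀ (j : Fin 3) (x : E3) (s : ℝ), 0 ≤ s → R < ‖x‖ → 𝔞 j x s = 0 :=
    fun j x s hs hx => hsupp𝔞 j x s hs (hsup3 x hx)
  have hu0' : ∀ (j k : Fin 3) (x : E3) (s : ℝ), 0 ≤ s → R < ‖x‖ →
      pd3 k (fun y => 𝔲 j y s) x = 0 :=
    fun j k x s hs hx => vanish_pd3_slice (fun y hy => hu0 j y s hs hy) k hx
  have ha0' : ∀ (j k : Fin 3) (x : E3) (s : ℝ), 0 ≤ s → R < ‖x‖ →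
      pd3 k (fun y => 𝔞 j y s) x = 0 :=
    fun j k x s hs hx => vanish_pd3_slice (fun y hy => ha0 j y s hs hy) k hx
  have hB0 : ∀ (j k : Fin 3) (x : E3) (s : ℝ), 0 ≤ s → R < ‖x‖ →
      curvK β 𝔞 j k x s = 0 := by
    intro j k x s hs hx
    unfold curvK
    rw [ha0' k j x s hs hx, ha0' j k x s hs hx, ha0 j x s hs hx]
    simp
  have hU1 : ∀ (j : Fin 3) (x : E3) (s : ℝ), 0 < s → R < ‖x‖ →
      pdT (fun p : E3 × ℝ => 𝔲 j p.1 p.2) (x, s) = 0 := by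
    intro j x s hs hx
    exact vanish_fderiv_joint (fun p h1 h2 => hu0 j p.1 p.2 h1.le h2) (0, 1) (x, s) hs hx
  have hA2 : ∀ (j : Fin 3) (x : E3) (s : ℝ), 0 < s → R < ‖x‖ →
      pdT (pdT (fun p : E3 × ℝ => 𝔞 j p.1 p.2)) (x, s) = 0 := by
    intro j x s hs hx
    have step1 : ∀ p : E3 × ℝ, 0 < p.2 → R < ‖p.1‖ →
        pdT (fun p : E3 × ℝ => 𝔞 j p.1 p.2) p = 0 :=
      vanish_fderiv_joint (fun p h1 h2 => ha0 j p.1 p.2 h1.le h2) (0, 1)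
    exact vanish_fderiv_joint step1 (0, 1) (x, s) hs hx
  -- compact set
  set K : Set E3 := Metric.closedBall (0 : E3) (R + 1) with hKdef
  have hKc : IsCompact K := isCompact_closedBall _ _
  have hxK : ∀ x : E3, x ∉ K → R < ‖x‖ := by
    intro x hx
    simp only [hKdef, Metric.mem_closedBall, dist_zero_right, not_le] at hx
    linarith
  have mkInt : ∀ f : E3 → ℝ, Continuous f → (∀ x : E3, x ∉ K → f x = 0) →
      Integrable f (volume : Measure E3) :=
    fun f hc h0 => hc.integrable_of_hasCompactSupport (HasCompactSupport.intro hKc h0)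
  -- continuity facts
  have cU : ∀ (j : Fin 3) (s : ℝ), Continuous fun x : E3 => 𝔲 j x s :=
    fun j s => (contDiff_slice (h𝔲 j) s).continuous
  have cA1 : ∀ (j : Fin 3) (s : ℝ),
      Continuous fun x : E3 => pdT (fun p : E3 × ℝ => 𝔞 j p.1 p.2) (x, s) :=
    fun j s => (contDiff_slice (contDiff_pdT (h𝔞 j)) s).continuous
  have cU1 : ∀ (j : Fin 3) (s : ℝ),
      Continuous fun x : E3 => pdT (fun p : E3 × ℝ => 𝔲 j p.1 p.2) (x, s) :=
    fun j s => (contDiff_slice (contDiff_pdT (h𝔲 j)) s).continuous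
  have cA2 : ∀ (j : Fin 3) (s : ℝ),
      Continuous fun x : E3 => pdT (pdT (fun p : E3 × ℝ => 𝔞 j p.1 p.2)) (x, s) :=
    fun j s => (contDiff_slice (contDiff_pdT (contDiff_pdT (h𝔞 j))) s).continuous
  have cBs : ∀ (j k : Fin 3) (s : ℝ), ContDiff ℝ (⊤ : ℕ∞) fun y : E3 => curvK β 𝔞 j k y s := by
    intro j k s
    have he : (fun y : E3 => curvK β 𝔞 j k y s)
        = fun y : E3 => pd3 j (fun z => 𝔞 k z s) y - pd3 k (fun z => 𝔞 j z s) y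
            + β (𝔞 j y s) (𝔞 k y s) := rfl
    rw [he]
    exact ((contDiff_pd3 (contDiff_slice (h𝔞 k) s) j).sub
        (contDiff_pd3 (contDiff_slice (h𝔞 j) s) k)).add
      (contDiff_beta_comp (contDiff_slice (h𝔞 j) s) (contDiff_slice (h𝔞 k) s))
  have ccov : ∀ (j k : Fin 3) (s : ℝ), Continuous fun x : E3 => covExtK β 𝔞 𝔲 j k x s := by
    intro j k s
    have he : (fun x : E3 => covExtK β 𝔞 𝔲 j k x s)
        = fun x : E3 => (pd3 j (fun z => 𝔲 k z s) x + β (𝔞 j x s) (𝔲 k x s))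
            - (pd3 k (fun z => 𝔲 j z s) x + β (𝔞 k x s) (𝔲 j x s)) := rfl
    rw [he]
    exact (((contDiff_pd3 (contDiff_slice (h𝔲 k) s) j).continuous).add
        (continuous_beta_comp ((contDiff_slice (h𝔞 j) s).continuous) (cU k s))).sub
      (((contDiff_pd3 (contDiff_slice (h𝔲 j) s) k).continuous).add
        (continuous_beta_comp ((contDiff_slice (h𝔞 k) s).continuous) (cU j s)))

  -- rewrite time derivatives in hypotheses and goal
  simp only [d1a, d1u] at hint hdecay ⊢
  -- integrability of the building blocks at a fixed time s ≥ 0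
  have int_i1 : ∀ (j k : Fin 3) (s : ℝ), 0 ≤ s → Integrable (fun x : E3 =>
      (inner ℝ (𝔲 j x s) (pd3 k (fun y => curvK β 𝔞 k j y s) x) : ℝ)) volume := by
    intro j k s hs
    refine mkInt _ ((cU j s).inner (contDiff_pd3 (cBs k j s) k).continuous) fun x hx => ?_
    rw [hu0 j x s hs (hxK x hx)]
    simp
  have int_i2 : ∀ (j k : Fin 3) (s : ℝ), 0 ≤ s → Integrable (fun x : E3 =>
      (inner ℝ (𝔲 j x s) (β (𝔞 k x s) (curvK β 𝔞 k j x s)) : ℝ)) volume := by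
    intro j k s hs
    refine mkInt _ ((cU j s).inner (continuous_beta_comp
      ((contDiff_slice (h𝔞 k) s).continuous) (cBs k j s).continuous)) fun x hx => ?_
    rw [hu0 j x s hs (hxK x hx)]
    simp
  have int_f : ∀ (j k : Fin 3) (s : ℝ), 0 ≤ s → Integrable (fun x : E3 =>
      (inner ℝ (pd3 k (fun y => 𝔲 j y s) x + β (𝔞 k x s) (𝔲 j x s))
        (curvK β 𝔞 k j x s) : ℝ)) volume := by
    intro j k s hs
    refine mkInt _ (((contDiff_pd3 (contDiff_slice (h𝔲 j) s) k).continuous.add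
      (continuous_beta_comp ((contDiff_slice (h𝔞 k) s).continuous) (cU j s))).inner
        (cBs k j s).continuous) fun x hx => ?_
    rw [hB0 k j x s hs (hxK x hx)]
    simp
  have int_g : ∀ (j k : Fin 3) (s : ℝ), 0 ≤ s → Integrable (fun x : E3 =>
      (inner ℝ (curvK β 𝔞 j k x s) (covExtK β 𝔞 𝔲 j k x s) : ℝ)) volume := by
    intro j k s hs
    refine mkInt _ ((cBs j k s).continuous.inner (ccov j k s)) fun x hx => ?_
    rw [hB0 j k x s hs (hxK x hx)]
    simp
  -- the main pointwise-summed identity, for every s ≥ 0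
  have hmain : ∀ s : ℝ, 0 ≤ s →
      ∑ j, ∫ x : E3, (inner ℝ (𝔲 j x s)
          (pdT (pdT (fun p : E3 × ℝ => 𝔞 j p.1 p.2)) (x, s)) : ℝ)
        = (1 / 2) * ∑ j, ∑ k, ∫ x : E3,
            (inner ℝ (curvK β 𝔞 j k x s) (covExtK β 𝔞 𝔲 j k x s) : ℝ) := by
    intro s hs
    have stepA : ∀ j : Fin 3, ∫ x : E3, (inner ℝ (𝔲 j x s)
        (pdT (pdT (fun p : E3 × ℝ => 𝔞 j p.1 p.2)) (x, s)) : ℝ)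
        = ∑ k, ∫ x : E3, (inner ℝ (pd3 k (fun y => 𝔲 j y s) x + β (𝔞 k x s) (𝔲 j x s))
            (curvK β 𝔞 k j x s) : ℝ) := by
      intro j
      have e1 : ∀ x : E3, (inner ℝ (𝔲 j x s)
          (pdT (pdT (fun p : E3 × ℝ => 𝔞 j p.1 p.2)) (x, s)) : ℝ)
          = ∑ k, (-(inner ℝ (𝔲 j x s) (pd3 k (fun y => curvK β 𝔞 k j y s) x) : ℝ)
              + -(inner ℝ (𝔲 j x s) (β (𝔞 k x s) (curvK β 𝔞 k j x s)) : ℝ)) := by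
        intro x
        rw [hYMP' j x s hs, inner_neg_right, inner_sum, ← Finset.sum_neg_distrib]
        refine Finset.sum_congr rfl fun k _ => ?_
        rw [inner_add_right]
        ring
      have ii1 : ∀ k : Fin 3, Integrable (fun x : E3 =>
          -(inner ℝ (𝔲 j x s) (pd3 k (fun y => curvK β 𝔞 k j y s) x) : ℝ)) volume :=
        fun k => (int_i1 j k s hs).neg
      have ii2 : ∀ k : Fin 3, Integrable (fun x : E3 =>
          -(inner ℝ (𝔲 j x s) (β (𝔞 k x s) (curvK β 𝔞 k j x s)) : ℝ)) volume :=
        fun k => (int_i2 j k s hs).neg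
      have iisum : ∀ k : Fin 3, Integrable (fun x : E3 =>
          -(inner ℝ (𝔲 j x s) (pd3 k (fun y => curvK β 𝔞 k j y s) x) : ℝ)
            + -(inner ℝ (𝔲 j x s) (β (𝔞 k x s) (curvK β 𝔞 k j x s)) : ℝ)) volume :=
        fun k => (ii1 k).add (ii2 k)
      rw [integral_congr_ae (Filter.Eventually.of_forall e1)]
      rw [integral_finset_sum _ (fun k _ => iisum k)]
      refine Finset.sum_congr rfl fun k _ => ?_
      rw [integral_add (ii1 k) (ii2 k), integral_neg, integral_neg]
      have c2 : -∫ x : E3, (inner ℝ (𝔲 j x s) (pd3 k (fun y => curvK β 𝔞 k j y s) x) : ℝ)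
          = ∫ x : E3, (inner ℝ (pd3 k (fun y => 𝔲 j y s) x) (curvK β 𝔞 k j x s) : ℝ) := by
        have hibp := integral_inner_pd3 (contDiff_slice (h𝔲 j) s) (cBs k j s) hKc
          (fun x hx => hu0 j x s hs (hxK x hx)) (fun x hx => hB0 k j x s hs (hxK x hx)) k
        rw [hibp, neg_neg]
      have c3 : -∫ x : E3, (inner ℝ (𝔲 j x s) (β (𝔞 k x s) (curvK β 𝔞 k j x s)) : ℝ)
          = ∫ x : E3, (inner ℝ (β (𝔞 k x s) (𝔲 j x s)) (curvK β 𝔞 k j x s) : ℝ) := by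
        rw [← integral_neg]
        refine integral_congr_ae (Filter.Eventually.of_forall fun x => ?_)
        show -(inner ℝ (𝔲 j x s) (β (𝔞 k x s) (curvK β 𝔞 k j x s)) : ℝ)
            = (inner ℝ (β (𝔞 k x s) (𝔲 j x s)) (curvK β 𝔞 k j x s) : ℝ)
        have := hinv (𝔲 j x s) (curvK β 𝔞 k j x s) (𝔞 k x s)
        linarith
      rw [c2, c3, ← integral_add]
      · refine integral_congr_ae (Filter.Eventually.of_forall fun x => ?_)
        show (inner ℝ (pd3 k (fun y => 𝔲 j y s) x) (curvK β 𝔞 k j x s) : ℝ)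
            + (inner ℝ (β (𝔞 k x s) (𝔲 j x s)) (curvK β 𝔞 k j x s) : ℝ)
          = (inner ℝ (pd3 k (fun y => 𝔲 j y s) x + β (𝔞 k x s) (𝔲 j x s))
              (curvK β 𝔞 k j x s) : ℝ)
        rw [inner_add_left]
      · refine mkInt _ ((contDiff_pd3 (contDiff_slice (h𝔲 j) s) k).continuous.inner
          (cBs k j s).continuous) fun x hx => ?_
        rw [hB0 k j x s hs (hxK x hx)]
        simp
      · refine mkInt _ ((continuous_beta_comp ((contDiff_slice (h𝔞 k) s).continuous)
          (cU j s)).inner (cBs k j s).continuous) fun x hx => ?_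
        rw [hB0 k j x s hs (hxK x hx)]
        simp
    simp only [stepA]
    -- now push sums inside the integrals and use the pointwise algebraic identity
    have hL : ∑ j, ∑ k, ∫ x : E3, (inner ℝ (pd3 k (fun y => 𝔲 j y s) x + β (𝔞 k x s) (𝔲 j x s))
        (curvK β 𝔞 k j x s) : ℝ)
        = ∫ x : E3, ∑ j, ∑ k, (inner ℝ (pd3 k (fun y => 𝔲 j y s) x + β (𝔞 k x s) (𝔲 j x s))
            (curvK β 𝔞 k j x s) : ℝ) := by
      have hL1 : ∀ j : Fin 3, ∑ k, ∫ x : E3,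
          (inner ℝ (pd3 k (fun y => 𝔲 j y s) x + β (𝔞 k x s) (𝔲 j x s))
            (curvK β 𝔞 k j x s) : ℝ)
          = ∫ x : E3, ∑ k, (inner ℝ (pd3 k (fun y => 𝔲 j y s) x + β (𝔞 k x s) (𝔲 j x s))
              (curvK β 𝔞 k j x s) : ℝ) :=
        fun j => (integral_finset_sum _ (fun k _ => int_f j k s hs)).symm
      rw [Finset.sum_congr rfl fun j _ => hL1 j]
      exact (integral_finset_sum _ (fun j _ => integrable_finset_sum _
        (fun k _ => int_f j k s hs))).symm
    have hRR : ((1 : ℝ) / 2) * ∑ j, ∑ k, ∫ x : E3,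
        (inner ℝ (curvK β 𝔞 j k x s) (covExtK β 𝔞 𝔲 j k x s) : ℝ)
        = ∫ x : E3, (1 / 2) * ∑ j, ∑ k,
            (inner ℝ (curvK β 𝔞 j k x s) (covExtK β 𝔞 𝔲 j k x s) : ℝ) := by
      rw [integral_const_mul]
      congr 1
      have hR1 : ∀ j : Fin 3, ∑ k, ∫ x : E3,
          (inner ℝ (curvK β 𝔞 j k x s) (covExtK β 𝔞 𝔲 j k x s) : ℝ)
          = ∫ x : E3, ∑ k, (inner ℝ (curvK β 𝔞 j k x s) (covExtK β 𝔞 𝔲 j k x s) : ℝ) :=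
        fun j => (integral_finset_sum _ (fun k _ => int_g j k s hs)).symm
      rw [Finset.sum_congr rfl fun j _ => hR1 j]
      exact (integral_finset_sum _ (fun j _ => integrable_finset_sum _
        (fun k _ => int_g j k s hs))).symm
    rw [hL, hRR]
    refine integral_congr_ae (Filter.Eventually.of_forall fun x => ?_)
    have hptwise := sum_inner_identity (fun a b => curvK β 𝔞 a b x s)
      (fun a b => pd3 a (fun y => 𝔲 b y s) x + β (𝔞 a x s) (𝔲 b x s))
      (fun a b => curv_antisym halt 𝔞 a b x s)
    exact hptwise
  -- continuity of F at 0 from the right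
  have hcont : ContinuousWithinAt (fun s : ℝ => ∑ j, ∫ x : E3, (inner ℝ (𝔲 j x s)
      (pdT (fun p : E3 × ℝ => 𝔞 j p.1 p.2) (x, s)) : ℝ)) (Set.Ici 0) 0 := by
    refine tendsto_finset_sum _ fun j _ => ?_
    obtain ⟨C, hC⟩ := (hKc.prod (isCompact_Icc (a := (0 : ℝ)) (b := 1))).exists_bound_of_continuousOn
      (Continuous.continuousOn (f := fun p : E3 × ℝ =>
        (inner ℝ (𝔲 j p.1 p.2) (pdT (fun q : E3 × ℝ => 𝔞 j q.1 q.2) p) : ℝ))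
        ((h𝔲 j).continuous.inner (contDiff_pdT (h𝔞 j)).continuous))
    have hIco : Set.Ico (0 : ℝ) 1 ∈ nhdsWithin (0 : ℝ) (Set.Ici 0) :=
      Ico_mem_nhdsGE_of_mem ⟨le_refl 0, zero_lt_one⟩
    refine tendsto_integral_filter_of_dominated_convergence (K.indicator fun _ => C)
      (Filter.Eventually.of_forall fun t => ((cU j t).inner (cA1 j t)).aestronglyMeasurable)
      ?_ ?_ ?_
    · filter_upwards [hIco] with t ht
      refine Filter.Eventually.of_forall fun x => ?_
      by_cases hx : x ∈ K
      · rw [Set.indicator_of_mem hx]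
        exact hC (x, t) ⟨hx, ⟨ht.1, ht.2.le⟩⟩
      · rw [Set.indicator_of_notMem hx]
        simp [hu0 j x t ht.1 (hxK x hx)]
    · rw [integrable_indicator_iff hKc.measurableSet]
      exact (integrableOn_const_iff (C := C)).2 (Or.inr hKc.measure_lt_top)
    · refine Filter.Eventually.of_forall fun x => ?_
      have hcx : Continuous fun t : ℝ => (inner ℝ (𝔲 j x t)
          (pdT (fun q : E3 × ℝ => 𝔞 j q.1 q.2) (x, t)) : ℝ) :=
        ((h𝔲 j).continuous.comp (Continuous.prodMk_right x)).inner
          ((contDiff_pdT (h𝔞 j)).continuous.comp (Continuous.prodMk_right x))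
      exact hcx.continuousAt.tendsto.mono_left nhdsWithin_le_nhds
  -- derivative of F on (0, ∞)
  have hderiv : ∀ s ∈ Set.Ioi (0 : ℝ), HasDerivAt
      (fun t : ℝ => ∑ j, ∫ x : E3, (inner ℝ (𝔲 j x t)
        (pdT (fun p : E3 × ℝ => 𝔞 j p.1 p.2) (x, t)) : ℝ))
      ((∑ j, ∫ x : E3, (inner ℝ (pdT (fun p : E3 × ℝ => 𝔞 j p.1 p.2) (x, s))
          (pdT (fun p : E3 × ℝ => 𝔲 j p.1 p.2) (x, s)) : ℝ))
        + (1 / 2) * ∑ j, ∑ k, ∫ x : E3,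
            (inner ℝ (curvK β 𝔞 j k x s) (covExtK β 𝔞 𝔲 j k x s) : ℝ)) s := by
    intro s hs
    have hs0 : (0 : ℝ) < s := hs
    have Hj : ∀ j : Fin 3, HasDerivAt
        (fun t : ℝ => ∫ x : E3, (inner ℝ (𝔲 j x t)
          (pdT (fun p : E3 × ℝ => 𝔞 j p.1 p.2) (x, t)) : ℝ))
        (∫ x : E3, ((inner ℝ (𝔲 j x s)
            (pdT (pdT (fun p : E3 × ℝ => 𝔞 j p.1 p.2)) (x, s)) : ℝ)
          + (inner ℝ (pdT (fun p : E3 × ℝ => 𝔲 j p.1 p.2) (x, s))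
              (pdT (fun p : E3 × ℝ => 𝔞 j p.1 p.2) (x, s)) : ℝ))) s := by
      intro j
      obtain ⟨C, hC⟩ := (hKc.prod (isCompact_Icc (a := (0 : ℝ))
          (b := 2 * s))).exists_bound_of_continuousOn
        (Continuous.continuousOn (f := fun p : E3 × ℝ =>
          (inner ℝ (𝔲 j p.1 p.2) (pdT (pdT (fun q : E3 × ℝ => 𝔞 j q.1 q.2)) p) : ℝ)
            + (inner ℝ (pdT (fun q : E3 × ℝ => 𝔲 j q.1 q.2) p)
                (pdT (fun q : E3 × ℝ => 𝔞 j q.1 q.2) p) : ℝ))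
          (((h𝔲 j).continuous.inner
              (contDiff_pdT (contDiff_pdT (h𝔞 j))).continuous).add
            ((contDiff_pdT (h𝔲 j)).continuous.inner (contDiff_pdT (h𝔞 j)).continuous)))
      have main := hasDerivAt_integral_of_dominated_loc_of_deriv_le
        (μ := (volume : Measure E3)) (x₀ := s) (s := Metric.ball s s)
        (F := fun (t : ℝ) (x : E3) => (inner ℝ (𝔲 j x t)
          (pdT (fun p : E3 × ℝ => 𝔞 j p.1 p.2) (x, t)) : ℝ))
        (F' := fun (t : ℝ) (x : E3) => (inner ℝ (𝔲 j x t)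
            (pdT (pdT (fun p : E3 × ℝ => 𝔞 j p.1 p.2)) (x, t)) : ℝ)
          + (inner ℝ (pdT (fun p : E3 × ℝ => 𝔲 j p.1 p.2) (x, t))
              (pdT (fun p : E3 × ℝ => 𝔞 j p.1 p.2) (x, t)) : ℝ))
        (bound := K.indicator fun _ => C) (Metric.ball_mem_nhds s hs0)
        (Filter.Eventually.of_forall fun t => ((cU j t).inner (cA1 j t)).aestronglyMeasurable)
        (mkInt _ ((cU j s).inner (cA1 j s)) (fun x hx => by
          simp [hu0 j x s hs0.le (hxK x hx)]))
        ((((cU j s).inner (cA2 j s)).add ((cU1 j s).inner (cA1 j s))).aestronglyMeasurable)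
        (ae_of_all _ fun x t ht => by
          have htd : |t - s| < s := by
            rw [← Real.dist_eq]
            exact Metric.mem_ball.mp ht
          have ht0 : 0 < t := by
            have := abs_lt.mp htd
            linarith [this.1]
          have ht2 : t ≤ 2 * s := by
            have := abs_lt.mp htd
            linarith [this.2]
          by_cases hx : x ∈ K
          · rw [Set.indicator_of_mem hx]
            exact hC (x, t) ⟨hx, ⟨ht0.le, ht2⟩⟩
          · rw [Set.indicator_of_notMem hx]
            simp [hu0 j x t ht0.le (hxK x hx), hU1 j x t ht0 (hxK x hx)])
        (by
          rw [integrable_indicator_iff hKc.measurableSet]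
          exact (integrableOn_const_iff (C := C)).2 (Or.inr hKc.measure_lt_top))
        (ae_of_all _ fun x t _ =>
          (hasDerivAt_pdT (h𝔲 j) x t).inner ℝ (hasDerivAt_pdT (contDiff_pdT (h𝔞 j)) x t))
      exact main.2
    have HF := HasDerivAt.sum (u := Finset.univ) fun j _ => Hj j
    have isplit : ∑ j, ∫ x : E3, ((inner ℝ (𝔲 j x s)
          (pdT (pdT (fun p : E3 × ℝ => 𝔞 j p.1 p.2)) (x, s)) : ℝ)
        + (inner ℝ (pdT (fun p : E3 × ℝ => 𝔲 j p.1 p.2) (x, s))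
            (pdT (fun p : E3 × ℝ => 𝔞 j p.1 p.2) (x, s)) : ℝ))
        = (∑ j, ∫ x : E3, (inner ℝ (𝔲 j x s)
            (pdT (pdT (fun p : E3 × ℝ => 𝔞 j p.1 p.2)) (x, s)) : ℝ))
          + ∑ j, ∫ x : E3, (inner ℝ (pdT (fun p : E3 × ℝ => 𝔲 j p.1 p.2) (x, s))
              (pdT (fun p : E3 × ℝ => 𝔞 j p.1 p.2) (x, s)) : ℝ) := by
      rw [← Finset.sum_add_distrib]
      refine Finset.sum_congr rfl fun j _ => ?_
      refine integral_add ?_ ?_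
      · refine mkInt _ ((cU j s).inner (cA2 j s)) fun x hx => ?_
        rw [hu0 j x s hs0.le (hxK x hx)]
        simp
      · refine mkInt _ ((cU1 j s).inner (cA1 j s)) fun x hx => ?_
        rw [hU1 j x s hs0 (hxK x hx)]
        simp
    have icomm : ∀ j : Fin 3, ∫ x : E3, (inner ℝ (pdT (fun p : E3 × ℝ => 𝔲 j p.1 p.2) (x, s))
        (pdT (fun p : E3 × ℝ => 𝔞 j p.1 p.2) (x, s)) : ℝ)
        = ∫ x : E3, (inner ℝ (pdT (fun p : E3 × ℝ => 𝔞 j p.1 p.2) (x, s))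
            (pdT (fun p : E3 × ℝ => 𝔲 j p.1 p.2) (x, s)) : ℝ) :=
      fun j => integral_congr_ae (Filter.Eventually.of_forall fun x => real_inner_comm _ _)
    have hfinal : ∑ j, ∫ x : E3, ((inner ℝ (𝔲 j x s)
          (pdT (pdT (fun p : E3 × ℝ => 𝔞 j p.1 p.2)) (x, s)) : ℝ)
        + (inner ℝ (pdT (fun p : E3 × ℝ => 𝔲 j p.1 p.2) (x, s))
            (pdT (fun p : E3 × ℝ => 𝔞 j p.1 p.2) (x, s)) : ℝ))
        = (∑ j, ∫ x : E3, (inner ℝ (pdT (fun p : E3 × ℝ => 𝔞 j p.1 p.2) (x, s))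
            (pdT (fun p : E3 × ℝ => 𝔲 j p.1 p.2) (x, s)) : ℝ))
          + (1 / 2) * ∑ j, ∑ k, ∫ x : E3,
              (inner ℝ (curvK β 𝔞 j k x s) (covExtK β 𝔞 𝔲 j k x s) : ℝ) := by
      rw [isplit, hmain s hs0.le]
      rw [Finset.sum_congr rfl fun j _ => icomm j]
      ring
    rw [hfinal] at HF
    exact HF
  have key := MeasureTheory.integral_Ioi_of_hasDerivAt_of_tendsto hcont hderiv hint hdecay
  rw [key, zero_sub]
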